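/- Consider f(x; W) = b₀ − ⟨1, max(0, W₂ᵀ max(0, W₁ᵀx + b₁) + b₂)⟩ with W₂ having all entries ≤ 0. For a fixed binary vector a₁ ∈ {0,1}^{l₁}, define f₁(x; W, a₁) = b₀ − ⟨1, max(0, W₂ᵀ·diag(a₁)·(W₁ᵀx + b₁) + b₂)⟩. Then f₁(x; W, a₁) ≤ f(x; W) for all x, and for fixed x and fixed (b₀, W₂, b₂), the map (W₁, b₁) ↦ f₁(x; W, a₁) is concave. -/

import Mathlib

lemma convexOn_finset_sum {E : Type*} [AddCommGroup E] [Module ℝ E] {ι : Type*}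
    (t : Finset ι) (f : ι → E → ℝ) (hf : ∀ i ∈ t, ConvexOn ℝ Set.univ (f i)) :
    ConvexOn ℝ Set.univ (fun p => ∑ i ∈ t, f i p) := by
  induction t using Finset.cons_induction with
  | empty => simpa using convexOn_const 0 convex_univ
  | cons a t ha ih =>
    simp only [Finset.sum_cons]
    exact (hf a (Finset.mem_cons_self a t)).add
      (ih fun i hi => hf i (Finset.mem_cons_of_mem hi))

/-- For a two-hidden-layer sign-constrained network with `W₂ ⪯ 0` and a fixed binary
first-layer activation pattern `a₁`, the function `f₁` (replacing the first-layer rectified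
outputs by `diag(a₁)·z₁`) lower bounds `f`, and `f₁` is concave in `(W₁, b₁)` for fixed
`x`, `b₀`, `W₂`, `b₂`. -/
theorem f1_lower_bound_and_concave (n l1 l2 : ℕ) (x : Fin n → ℝ) (b0 : ℝ)
    (W2 : Fin l1 → Fin l2 → ℝ) (b2 : Fin l2 → ℝ) (a1 : Fin l1 → ℝ)
    (hW2 : ∀ j i, W2 j i ≤ 0) (ha1 : ∀ j, a1 j = 0 ∨ a1 j = 1) :
    (∀ (W1 : Fin l1 → Fin n → ℝ) (b1 : Fin l1 → ℝ),
      b0 - ∑ i, max 0 ((∑ j, W2 j i * (a1 j * ((∑ k, W1 j k * x k) + b1 j))) + b2 i) ≤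
        b0 - ∑ i, max 0 ((∑ j, W2 j i * max 0 ((∑ k, W1 j k * x k) + b1 j)) + b2 i)) ∧
    ConcaveOn ℝ Set.univ
      (fun p : (Fin l1 → Fin n → ℝ) × (Fin l1 → ℝ) =>
        b0 - ∑ i, max 0 ((∑ j, W2 j i * (a1 j * ((∑ k, p.1 j k * x k) + p.2 j))) + b2 i)) := by
  constructor
  · -- lower bound
    intro W1 b1
    apply sub_le_sub_left
    apply Finset.sum_le_sum
    intro i _
    apply max_le_max le_rfl
    refine add_le_add ?_ le_rfl
    apply Finset.sum_le_sum
    intro j _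
    apply mul_le_mul_of_nonpos_left _ (hW2 j i)
    rcases ha1 j with h | h
    · simp [h, le_max_left]
    · simp only [h, one_mul]
      exact le_max_right _ _
  · -- concavity
    set g : Fin l2 → (Fin l1 → Fin n → ℝ) × (Fin l1 → ℝ) → ℝ :=
      fun i p => ∑ j, W2 j i * (a1 j * ((∑ k, p.1 j k * x k) + p.2 j)) with hg
    have hlin : ∀ (i : Fin l2) (a b : ℝ) (p q : (Fin l1 → Fin n → ℝ) × (Fin l1 → ℝ)),
        g i (a • p + b • q) = a * g i p + b * g i q := by
      intro i a b p q
      simp only [hg, Finset.mul_sum, ← Finset.sum_add_distrib]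
      apply Finset.sum_congr rfl
      intro j _
      have hsum : ∑ k, (a • p + b • q).1 j k * x k
          = a * ∑ k, p.1 j k * x k + b * ∑ k, q.1 j k * x k := by
        rw [Finset.mul_sum, Finset.mul_sum, ← Finset.sum_add_distrib]
        apply Finset.sum_congr rfl
        intro k _
        simp [Prod.fst_add, Prod.smul_fst, mul_comm, mul_assoc, mul_left_comm]
        ring
      rw [hsum]
      simp only [Prod.snd_add, Prod.smul_snd, Pi.add_apply, Pi.smul_apply, smul_eq_mul]
      ring
    have hconv : ∀ i : Fin l2, ConvexOn ℝ Set.univ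
        (fun p : (Fin l1 → Fin n → ℝ) × (Fin l1 → ℝ) => max 0 (g i p + b2 i)) := by
      intro i
      refine ⟨convex_univ, ?_⟩
      intro p _ q _ a b ha hb hab
      simp only [smul_eq_mul]
      rw [hlin]
      have key : a * g i p + b * g i q + b2 i
          = a * (g i p + b2 i) + b * (g i q + b2 i) := by
        have : a * b2 i + b * b2 i = b2 i := by
          rw [← add_mul, hab, one_mul]
        ring_nf
        linarith [this]
      rw [key]
      apply max_le
      · have h1 : (0:ℝ) ≤ a * max 0 (g i p + b2 i) :=
          mul_nonneg ha (le_max_left _ _)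
        have h2 : (0:ℝ) ≤ b * max 0 (g i q + b2 i) :=
          mul_nonneg hb (le_max_left _ _)
        linarith
      · exact add_le_add
          (mul_le_mul_of_nonneg_left (le_max_right _ _) ha)
          (mul_le_mul_of_nonneg_left (le_max_right _ _) hb)
    have hS : ConvexOn ℝ Set.univ
        (fun p : (Fin l1 → Fin n → ℝ) × (Fin l1 → ℝ) =>
          ∑ i, max 0 (g i p + b2 i)) :=
      convexOn_finset_sum _ _ (fun i _ => hconv i)
    have heq : (fun p : (Fin l1 → Fin n → ℝ) × (Fin l1 → ℝ) =>
        b0 - ∑ i, max 0 ((∑ j, W2 j i * (a1 j * ((∑ k, p.1 j k * x k) + p.2 j))) + b2 i))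
        = ((fun _ => b0) - fun p => ∑ i, max 0 (g i p + b2 i)) := by
      funext p
      simp [hg]
    rw [heq]
    exact (concaveOn_const b0 convex_univ).sub hS
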